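/- Let n=2, ω(ψ)=(cos ψ, sin ψ), ρ(x)=½(1+|x−x₀|²) with x₀=φ₀ω(ψ₀), φ₀≠0, and H(x,p)=|p|/ρ(x). Define h̃(φ,ψ)=H(φω(ψ),ω(ψ))=1/ρ(φω(ψ)). Then (φ₀,ψ₀) is a critical point of h̃ with critical value E₀=1/ρ(x₀)=2, and the Hessian matrix of h̃ at (φ₀,ψ₀) satisfies ρ(x₀)⁴·det ∇²h̃(φ₀,ψ₀)=φ₀² and ρ(x₀)²·Tr ∇²h̃(φ₀,ψ₀)=−(1+φ₀²). -/

import Mathlib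

open Real

/-- For `n = 2`, `ω(ψ) = (cos ψ, sin ψ)`, `ρ(x) = ½(1+|x−x₀|²)` with
`x₀ = φ₀·ω(ψ₀)`, `φ₀ ≠ 0`, and `H(x,p) = |p|/ρ(x)`, the restriction
`h̃(φ,ψ) = H(φω(ψ), ω(ψ)) = 1/ρ(φω(ψ))` has a critical point at `(φ₀,ψ₀)` with critical
value `E₀ = 1/ρ(x₀) = 2`, and its Hessian there satisfies
`ρ(x₀)⁴ · det ∇²h̃ = φ₀²` and `ρ(x₀)² · Tr ∇²h̃ = −(1+φ₀²)`. -/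
theorem stmt4 (φ₀ ψ₀ : ℝ) (hφ₀ : φ₀ ≠ 0)
    (ω : ℝ → ℝ × ℝ) (hω : ∀ ψ, ω ψ = (Real.cos ψ, Real.sin ψ))
    (x₀ : ℝ × ℝ) (hx₀ : x₀ = φ₀ • ω ψ₀)
    (ρ : ℝ × ℝ → ℝ)
    (hρ : ∀ x, ρ x = (1 + ((x.1 - x₀.1) ^ 2 + (x.2 - x₀.2) ^ 2)) / 2)
    (H : ℝ × ℝ → ℝ × ℝ → ℝ)
    (hH : ∀ x p, H x p = Real.sqrt (p.1 ^ 2 + p.2 ^ 2) / ρ x)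
    (ht : ℝ → ℝ → ℝ) (hht : ∀ φ ψ, ht φ ψ = H (φ • ω ψ) (ω ψ))
    -- Hessian entries of `h̃` at `(φ₀, ψ₀)`
    (A B C D : ℝ)
    (hA : A = deriv (fun φ => deriv (fun φ' => ht φ' ψ₀) φ) φ₀)
    (hB : B = deriv (fun ψ => deriv (fun φ => ht φ ψ) φ₀) ψ₀)
    (hC : C = deriv (fun φ => deriv (fun ψ => ht φ ψ) ψ₀) φ₀)
    (hD : D = deriv (fun ψ => deriv (fun ψ' => ht φ₀ ψ') ψ) ψ₀) :
    -- critical point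
    deriv (fun φ => ht φ ψ₀) φ₀ = 0 ∧
    deriv (fun ψ => ht φ₀ ψ) ψ₀ = 0 ∧
    -- critical value E₀ = 1/ρ(x₀) = 2
    ht φ₀ ψ₀ = 1 / ρ x₀ ∧ ht φ₀ ψ₀ = 2 ∧
    -- Hessian determinant and trace identities
    ρ x₀ ^ 4 * (A * D - B * C) = φ₀ ^ 2 ∧
    ρ x₀ ^ 2 * (A + D) = -(1 + φ₀ ^ 2) := by
  have hcos : ∀ ψ : ℝ, HasDerivAt (fun ψ' => Real.cos (ψ' - ψ₀)) (-Real.sin (ψ - ψ₀)) ψ := by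
    intro ψ
    simpa [Function.comp_def] using (Real.hasDerivAt_cos (ψ - ψ₀)).comp ψ ((hasDerivAt_id ψ).sub_const ψ₀)
  have hsin : ∀ ψ : ℝ, HasDerivAt (fun ψ' => Real.sin (ψ' - ψ₀)) (Real.cos (ψ - ψ₀)) ψ := by
    intro ψ
    simpa [Function.comp_def] using (Real.hasDerivAt_sin (ψ - ψ₀)).comp ψ ((hasDerivAt_id ψ).sub_const ψ₀)
  have hpos : ∀ φ ψ : ℝ, 0 < 1 + φ ^ 2 + φ₀ ^ 2 - 2 * φ₀ * Real.cos (ψ - ψ₀) * φ := by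
    intro φ ψ
    nlinarith [Real.cos_le_one (ψ - ψ₀), Real.neg_one_le_cos (ψ - ψ₀),
      sq_nonneg (φ - φ₀), sq_nonneg (φ + φ₀)]
  have hkey : ∀ φ ψ : ℝ,
      ht φ ψ = 2 / (1 + φ ^ 2 + φ₀ ^ 2 - 2 * φ₀ * Real.cos (ψ - ψ₀) * φ) := by
    intro φ ψ
    have hS : ((φ • ω ψ).1 - x₀.1) ^ 2 + ((φ • ω ψ).2 - x₀.2) ^ 2
        = φ ^ 2 + φ₀ ^ 2 - 2 * φ₀ * Real.cos (ψ - ψ₀) * φ := by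
      rw [hx₀, hω ψ, hω ψ₀]
      simp only [Prod.smul_mk, smul_eq_mul, Real.cos_sub]
      nlinarith [Real.sin_sq_add_cos_sq ψ, Real.sin_sq_add_cos_sq ψ₀]
    have h1 : ((ω ψ).1) ^ 2 + ((ω ψ).2) ^ 2 = 1 := by
      rw [hω ψ]
      simpa using Real.sin_sq_add_cos_sq ψ
    rw [hht, hH, hρ, hS, h1, Real.sqrt_one]
    rw [show (1 + (φ ^ 2 + φ₀ ^ 2 - 2 * φ₀ * Real.cos (ψ - ψ₀) * φ)) / 2
        = (1 + φ ^ 2 + φ₀ ^ 2 - 2 * φ₀ * Real.cos (ψ - ψ₀) * φ) / 2 from by ring,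
      one_div_div]
  -- first derivative in φ
  have hdφ : ∀ φ ψ : ℝ, HasDerivAt (fun φ' => ht φ' ψ)
      (-(2 * (2 * φ - 2 * φ₀ * Real.cos (ψ - ψ₀)))
        / (1 + φ ^ 2 + φ₀ ^ 2 - 2 * φ₀ * Real.cos (ψ - ψ₀) * φ) ^ 2) φ := by
    intro φ ψ
    have hfun : (fun φ' => ht φ' ψ)
        = fun φ' => 2 / (1 + φ' ^ 2 + φ₀ ^ 2 - 2 * φ₀ * Real.cos (ψ - ψ₀) * φ') :=
      funext fun φ' => hkey φ' ψ
    rw [hfun]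
    have h1 : HasDerivAt (fun φ' : ℝ => 1 + φ' ^ 2 + φ₀ ^ 2) (2 * φ) φ := by
      have := ((hasDerivAt_pow 2 φ).const_add 1).add_const (φ₀ ^ 2)
      simpa using this
    have h2 : HasDerivAt (fun φ' : ℝ => 2 * φ₀ * Real.cos (ψ - ψ₀) * φ')
        (2 * φ₀ * Real.cos (ψ - ψ₀)) φ := by
      simpa using (hasDerivAt_id φ).const_mul (2 * φ₀ * Real.cos (ψ - ψ₀))
    have hden := h1.sub h2
    have hne : (1 + φ ^ 2 + φ₀ ^ 2 - 2 * φ₀ * Real.cos (ψ - ψ₀) * φ) ≠ 0 :=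
      ne_of_gt (hpos φ ψ)
    have hdiv := (hasDerivAt_const φ (2 : ℝ)).div hden hne
    refine hdiv.congr_deriv ?_
    simp only [Pi.sub_apply]
    ring
  -- first derivative in ψ
  have hdψ : ∀ φ ψ : ℝ, HasDerivAt (fun ψ' => ht φ ψ')
      (-(2 * (2 * φ₀ * Real.sin (ψ - ψ₀) * φ))
        / (1 + φ ^ 2 + φ₀ ^ 2 - 2 * φ₀ * Real.cos (ψ - ψ₀) * φ) ^ 2) ψ := by
    intro φ ψ
    have hfun : (fun ψ' => ht φ ψ')
        = fun ψ' => 2 / (1 + φ ^ 2 + φ₀ ^ 2 - 2 * φ₀ * Real.cos (ψ' - ψ₀) * φ) :=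
      funext fun ψ' => hkey φ ψ'
    rw [hfun]
    have h2 := ((hcos ψ).const_mul (2 * φ₀)).mul_const φ
    have hden := h2.const_sub (1 + φ ^ 2 + φ₀ ^ 2)
    have hne : (1 + φ ^ 2 + φ₀ ^ 2 - 2 * φ₀ * Real.cos (ψ - ψ₀) * φ) ≠ 0 :=
      ne_of_gt (hpos φ ψ)
    have hdiv := (hasDerivAt_const ψ (2 : ℝ)).div hden hne
    refine hdiv.congr_deriv ?_
    ring
  have hρ0 : ρ x₀ = 1 / 2 := by rw [hρ]; simp
  have e1 : deriv (fun φ => ht φ ψ₀) φ₀ = 0 := by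
    rw [(hdφ φ₀ ψ₀).deriv, sub_self, Real.cos_zero]; ring
  have e2 : deriv (fun ψ => ht φ₀ ψ) ψ₀ = 0 := by
    rw [(hdψ φ₀ ψ₀).deriv, sub_self, Real.sin_zero]; ring
  have e4 : ht φ₀ ψ₀ = 2 := by
    rw [hkey, sub_self, Real.cos_zero,
      show (1 + φ₀ ^ 2 + φ₀ ^ 2 - 2 * φ₀ * 1 * φ₀) = 1 from by ring]
    norm_num
  have e3 : ht φ₀ ψ₀ = 1 / ρ x₀ := by rw [e4, hρ0]; norm_num
  -- A
  have hAval : A = -4 := by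
    rw [hA]
    have hfun : (fun φ => deriv (fun φ' => ht φ' ψ₀) φ)
        = fun φ => ((-4) * φ + 4 * φ₀) / ((φ ^ 2 + (-(2 * φ₀)) * φ + (1 + φ₀ ^ 2)) ^ 2) := by
      funext φ
      rw [(hdφ φ ψ₀).deriv, sub_self, Real.cos_zero]
      ring
    rw [hfun]
    have hN : HasDerivAt (fun φ : ℝ => (-4) * φ + 4 * φ₀) (-4) φ₀ := by
      simpa using ((hasDerivAt_id φ₀).const_mul (-4 : ℝ)).add_const (4 * φ₀)
    have hg : HasDerivAt (fun φ : ℝ => φ ^ 2 + (-(2 * φ₀)) * φ + (1 + φ₀ ^ 2))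
        (2 * φ₀ + (-(2 * φ₀))) φ₀ := by
      have := ((hasDerivAt_pow 2 φ₀).add ((hasDerivAt_id φ₀).const_mul (-(2 * φ₀)))).add_const
        (1 + φ₀ ^ 2)
      simpa using this
    have hW := hg.pow 2
    have hne : (φ₀ ^ 2 + (-(2 * φ₀)) * φ₀ + (1 + φ₀ ^ 2)) ^ 2 ≠ 0 := by
      rw [show (φ₀ ^ 2 + (-(2 * φ₀)) * φ₀ + (1 + φ₀ ^ 2)) = 1 from by ring]; norm_num
    have hdiv := hN.div hW hne
    simp only [Pi.div_def, Pi.pow_def] at hdiv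
    rw [hdiv.deriv]
    rw [show (φ₀ ^ 2 + (-(2 * φ₀)) * φ₀ + (1 + φ₀ ^ 2)) = 1 from by ring]
    norm_num
  -- B
  have hBval : B = 0 := by
    rw [hB]
    have hfun : (fun ψ => deriv (fun φ => ht φ ψ) φ₀)
        = fun ψ => (4 * φ₀ * Real.cos (ψ - ψ₀) - 4 * φ₀)
            / ((1 + 2 * φ₀ ^ 2 - 2 * φ₀ ^ 2 * Real.cos (ψ - ψ₀)) ^ 2) := by
      funext ψ
      rw [(hdφ φ₀ ψ).deriv]
      ring
    rw [hfun]
    have hN := ((hcos ψ₀).const_mul (4 * φ₀)).sub_const (4 * φ₀)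
    have hg := ((hcos ψ₀).const_mul (2 * φ₀ ^ 2)).const_sub (1 + 2 * φ₀ ^ 2)
    have hW := hg.pow 2
    have hne : (1 + 2 * φ₀ ^ 2 - 2 * φ₀ ^ 2 * Real.cos (ψ₀ - ψ₀)) ^ 2 ≠ 0 := by
      rw [show (1 + 2 * φ₀ ^ 2 - 2 * φ₀ ^ 2 * Real.cos (ψ₀ - ψ₀)) = 1 from by
        rw [sub_self, Real.cos_zero]; ring]
      norm_num
    have hdiv := hN.div hW hne
    simp only [Pi.div_def, Pi.pow_def] at hdiv
    rw [hdiv.deriv, sub_self, Real.sin_zero, Real.cos_zero]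
    ring
  -- C
  have hCval : C = 0 := by
    rw [hC]
    have hfun : (fun φ => deriv (fun ψ => ht φ ψ) ψ₀) = fun _ => (0 : ℝ) := by
      funext φ
      rw [(hdψ φ ψ₀).deriv, sub_self, Real.sin_zero]
      ring
    rw [hfun, deriv_const]
  -- D
  have hDval : D = -4 * φ₀ ^ 2 := by
    rw [hD]
    have hfun : (fun ψ => deriv (fun ψ' => ht φ₀ ψ') ψ)
        = fun ψ => (-4 * φ₀ ^ 2) * Real.sin (ψ - ψ₀)
            / ((1 + 2 * φ₀ ^ 2 - 2 * φ₀ ^ 2 * Real.cos (ψ - ψ₀)) ^ 2) := by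
      funext ψ
      rw [(hdψ φ₀ ψ).deriv]
      ring
    rw [hfun]
    have hN := (hsin ψ₀).const_mul (-4 * φ₀ ^ 2)
    have hg := ((hcos ψ₀).const_mul (2 * φ₀ ^ 2)).const_sub (1 + 2 * φ₀ ^ 2)
    have hW := hg.pow 2
    have hne : (1 + 2 * φ₀ ^ 2 - 2 * φ₀ ^ 2 * Real.cos (ψ₀ - ψ₀)) ^ 2 ≠ 0 := by
      rw [show (1 + 2 * φ₀ ^ 2 - 2 * φ₀ ^ 2 * Real.cos (ψ₀ - ψ₀)) = 1 from by
        rw [sub_self, Real.cos_zero]; ring]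
      norm_num
    have hdiv := hN.div hW hne
    simp only [Pi.div_def, Pi.pow_def] at hdiv
    rw [hdiv.deriv, sub_self, Real.sin_zero, Real.cos_zero]
    ring
  refine ⟨e1, e2, e3, e4, ?_, ?_⟩
  · rw [hρ0, hAval, hBval, hCval, hDval]; ring
  · rw [hρ0, hAval, hDval]; ring
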